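/- Consider vectors X₀ = (τ₀,ξ₀), X₁ = (τ₁,ξ₁), X₂ = (τ₂,ξ₂) in R^{1+3} with X₀ = X₁ − X₂ and ξ₁, ξ₂ ≠ 0. Given signs ±₀, ±₁, ±₂, set h_j = τ_j ±_j |ξ_j| and θ₁₂ = θ(±₁ξ₁, ±₂ξ₂). Then max(|h₀|,|h₁|,|h₂|) ≳ min(|ξ₁|,|ξ₂|)·θ₁₂², with an absolute implicit constant. -/

import Mathlib

open InnerProductGeometry Real

private lemma one_sub_cos_lb {θ : ℝ} (h0 : 0 ≤ θ) (h1 : θ ≤ π) :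
    2 * θ ^ 2 ≤ π ^ 2 * (1 - Real.cos θ) := by
  have hπ : (0:ℝ) < π := Real.pi_pos
  have hs : θ / π ≤ Real.sin (θ / 2) := by
    have h := Real.mul_le_sin (x := θ / 2) (by linarith) (by linarith)
    have : 2 / π * (θ / 2) = θ / π := by field_simp
    linarith [this ▸ h]
  have h0' : 0 ≤ θ / π := div_nonneg h0 hπ.le
  have hsq : (θ / π) ^ 2 ≤ Real.sin (θ / 2) ^ 2 := by nlinarith
  have hcos : 1 - Real.cos θ = 2 * Real.sin (θ / 2) ^ 2 := by
    have h := Real.sin_sq_eq_half_sub (θ / 2)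
    rw [show 2 * (θ / 2) = θ by ring] at h
    linarith
  rw [hcos]
  have hdiv : (θ / π) ^ 2 = θ ^ 2 / π ^ 2 := div_pow θ π 2
  rw [hdiv] at hsq
  have : π ^ 2 * (θ ^ 2 / π ^ 2) = θ ^ 2 := by field_simp
  nlinarith

variable {E : Type*} [NormedAddCommGroup E] [InnerProductSpace ℝ E]

/-- `‖a‖+‖b‖−‖a+b‖ ≳ min(‖a‖,‖b‖)·θ(a,b)²`. -/
private lemma key_add (a b : E) (ha : a ≠ 0) (hb : b ≠ 0) :
    min ‖a‖ ‖b‖ * angle a b ^ 2 ≤ π ^ 2 * (‖a‖ + ‖b‖ - ‖a + b‖) := by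
  set θ := angle a b with hθ
  have hθ0 : 0 ≤ θ := angle_nonneg a b
  have hθπ : θ ≤ π := angle_le_pi a b
  have hinner : Real.cos θ * (‖a‖ * ‖b‖) = inner ℝ a b :=
    cos_angle_mul_norm_mul_norm a b
  have hnorm : ‖a + b‖ ^ 2 = ‖a‖ ^ 2 + 2 * inner ℝ a b + ‖b‖ ^ 2 := norm_add_sq_real a b
  have ha0 : (0:ℝ) < ‖a‖ := norm_pos_iff.2 ha
  have hb0 : (0:ℝ) < ‖b‖ := norm_pos_iff.2 hb
  have hN : (0:ℝ) ≤ ‖a + b‖ := norm_nonneg _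
  have hSN : ‖a + b‖ ≤ ‖a‖ + ‖b‖ := norm_add_le a b
  have hmin : min ‖a‖ ‖b‖ * (‖a‖ + ‖b‖) ≤ 2 * (‖a‖ * ‖b‖) := by
    rcases min_cases ‖a‖ ‖b‖ with ⟨h, h'⟩ | ⟨h, h'⟩ <;> rw [h] <;> nlinarith
  have hmin0 : (0:ℝ) ≤ min ‖a‖ ‖b‖ := le_min ha0.le hb0.le
  have hcos := one_sub_cos_lb hθ0 hθπ
  have hfact : (‖a‖ + ‖b‖ - ‖a + b‖) * (‖a‖ + ‖b‖ + ‖a + b‖)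
      = 2 * (‖a‖ * ‖b‖) * (1 - Real.cos θ) := by nlinarith
  have hD0 : 0 ≤ ‖a‖ + ‖b‖ - ‖a + b‖ := by linarith
  have h4 : (‖a‖ + ‖b‖ - ‖a + b‖) * (‖a‖ + ‖b‖ + ‖a + b‖)
      ≤ (‖a‖ + ‖b‖ - ‖a + b‖) * (2 * (‖a‖ + ‖b‖)) :=
    mul_le_mul_of_nonneg_left (by linarith) hD0
  have h2 : 2 * (‖a‖ * ‖b‖) * (2 * θ ^ 2) ≤ 2 * (‖a‖ * ‖b‖) * (π ^ 2 * (1 - Real.cos θ)) :=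
    mul_le_mul_of_nonneg_left hcos (by positivity)
  have h3 : min ‖a‖ ‖b‖ * (‖a‖ + ‖b‖) * θ ^ 2 ≤ 2 * (‖a‖ * ‖b‖) * θ ^ 2 :=
    mul_le_mul_of_nonneg_right hmin (sq_nonneg θ)
  have hfin : min ‖a‖ ‖b‖ * θ ^ 2 * (2 * (‖a‖ + ‖b‖))
      ≤ π ^ 2 * (‖a‖ + ‖b‖ - ‖a + b‖) * (2 * (‖a‖ + ‖b‖)) := by nlinarith
  exact le_of_mul_le_mul_right hfin (by positivity)

/-- `‖a−b‖ − |‖a‖−‖b‖| ≳ min(‖a‖,‖b‖)·θ(a,b)²`. -/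
private lemma key_sub (a b : E) (ha : a ≠ 0) (hb : b ≠ 0) :
    min ‖a‖ ‖b‖ * angle a b ^ 2 ≤ π ^ 2 * (‖a - b‖ - |‖a‖ - ‖b‖|) := by
  set θ := angle a b with hθ
  have hθ0 : 0 ≤ θ := angle_nonneg a b
  have hθπ : θ ≤ π := angle_le_pi a b
  have hinner : Real.cos θ * (‖a‖ * ‖b‖) = inner ℝ a b :=
    cos_angle_mul_norm_mul_norm a b
  have hnorm : ‖a - b‖ ^ 2 = ‖a‖ ^ 2 - 2 * inner ℝ a b + ‖b‖ ^ 2 := norm_sub_sq_real a b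
  have ha0 : (0:ℝ) < ‖a‖ := norm_pos_iff.2 ha
  have hb0 : (0:ℝ) < ‖b‖ := norm_pos_iff.2 hb
  have hR : |‖a‖ - ‖b‖| ≤ ‖a - b‖ := abs_norm_sub_norm_le a b
  have hNS : ‖a - b‖ ≤ ‖a‖ + ‖b‖ := norm_sub_le a b
  have hRS : |‖a‖ - ‖b‖| ≤ ‖a‖ + ‖b‖ := by
    rcases abs_cases (‖a‖ - ‖b‖) with ⟨h, _⟩ | ⟨h, _⟩ <;> rw [h] <;> linarith
  have hmin : min ‖a‖ ‖b‖ * (‖a‖ + ‖b‖) ≤ 2 * (‖a‖ * ‖b‖) := by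
    rcases min_cases ‖a‖ ‖b‖ with ⟨h, h'⟩ | ⟨h, h'⟩ <;> rw [h] <;> nlinarith
  have hmin0 : (0:ℝ) ≤ min ‖a‖ ‖b‖ := le_min ha0.le hb0.le
  have hcos := one_sub_cos_lb hθ0 hθπ
  have hRsq : |‖a‖ - ‖b‖| ^ 2 = (‖a‖ - ‖b‖) ^ 2 := sq_abs _
  have hfact : (‖a - b‖ - |‖a‖ - ‖b‖|) * (‖a - b‖ + |‖a‖ - ‖b‖|)
      = 2 * (‖a‖ * ‖b‖) * (1 - Real.cos θ) := by nlinarith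
  have hD0 : 0 ≤ ‖a - b‖ - |‖a‖ - ‖b‖| := by linarith
  have h4 : (‖a - b‖ - |‖a‖ - ‖b‖|) * (‖a - b‖ + |‖a‖ - ‖b‖|)
      ≤ (‖a - b‖ - |‖a‖ - ‖b‖|) * (2 * (‖a‖ + ‖b‖)) :=
    mul_le_mul_of_nonneg_left (by linarith) hD0
  have h2 : 2 * (‖a‖ * ‖b‖) * (2 * θ ^ 2) ≤ 2 * (‖a‖ * ‖b‖) * (π ^ 2 * (1 - Real.cos θ)) :=
    mul_le_mul_of_nonneg_left hcos (by positivity)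
  have h3 : min ‖a‖ ‖b‖ * (‖a‖ + ‖b‖) * θ ^ 2 ≤ 2 * (‖a‖ * ‖b‖) * θ ^ 2 :=
    mul_le_mul_of_nonneg_right hmin (sq_nonneg θ)
  have hfin : min ‖a‖ ‖b‖ * θ ^ 2 * (2 * (‖a‖ + ‖b‖))
      ≤ π ^ 2 * (‖a - b‖ - |‖a‖ - ‖b‖|) * (2 * (‖a‖ + ‖b‖)) := by nlinarith
  exact le_of_mul_le_mul_right hfin (by positivity)

/-- For a bilinear interaction `X₀ = X₁ − X₂` with `ξ₁, ξ₂ ≠ 0` and signs `±₀,±₁,±₂`,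
setting `h_j = τ_j ±_j |ξ_j|` and `θ₁₂ = θ(±₁ξ₁, ±₂ξ₂)`,
one has `max(|h₀|,|h₁|,|h₂|) ≳ min(|ξ₁|,|ξ₂|)·θ₁₂²` with absolute implicit constant. -/
theorem bilinear_interaction_angle_bound :
    ∃ C : ℝ, 0 < C ∧
      ∀ (s₀ s₁ s₂ : ℝ), (s₀ = 1 ∨ s₀ = -1) → (s₁ = 1 ∨ s₁ = -1) → (s₂ = 1 ∨ s₂ = -1) →
      ∀ (τ₀ τ₁ τ₂ : ℝ) (ξ₀ ξ₁ ξ₂ : EuclideanSpace ℝ (Fin 3)),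
        ξ₁ ≠ 0 → ξ₂ ≠ 0 → τ₀ = τ₁ - τ₂ → ξ₀ = ξ₁ - ξ₂ →
        min ‖ξ₁‖ ‖ξ₂‖ * angle (s₁ • ξ₁) (s₂ • ξ₂) ^ 2 ≤
          C * max (|τ₀ + s₀ * ‖ξ₀‖|) (max (|τ₁ + s₁ * ‖ξ₁‖|) (|τ₂ + s₂ * ‖ξ₂‖|)) := by
  refine ⟨30, by norm_num, ?_⟩
  intro s₀ s₁ s₂ hs₀ hs₁ hs₂ τ₀ τ₁ τ₂ ξ₀ ξ₁ ξ₂ hξ₁ hξ₂ hτ hξ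
  set M := max (|τ₀ + s₀ * ‖ξ₀‖|) (max (|τ₁ + s₁ * ‖ξ₁‖|) (|τ₂ + s₂ * ‖ξ₂‖|)) with hM
  have h3M : |s₀ * ‖ξ₀‖ - s₁ * ‖ξ₁‖ + s₂ * ‖ξ₂‖| ≤ 3 * M := by
    have h0 : |τ₀ + s₀ * ‖ξ₀‖| ≤ M := le_max_left _ _
    have h1 : |τ₁ + s₁ * ‖ξ₁‖| ≤ M := le_trans (le_max_left _ _) (le_max_right _ _)
    have h2 : |τ₂ + s₂ * ‖ξ₂‖| ≤ M := le_trans (le_max_right _ _) (le_max_right _ _)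
    have heq : s₀ * ‖ξ₀‖ - s₁ * ‖ξ₁‖ + s₂ * ‖ξ₂‖
        = (τ₀ + s₀ * ‖ξ₀‖) - (τ₁ + s₁ * ‖ξ₁‖) + (τ₂ + s₂ * ‖ξ₂‖) := by rw [hτ]; ring
    rw [heq]
    calc |(τ₀ + s₀ * ‖ξ₀‖) - (τ₁ + s₁ * ‖ξ₁‖) + (τ₂ + s₂ * ‖ξ₂‖)|
        ≤ |(τ₀ + s₀ * ‖ξ₀‖) - (τ₁ + s₁ * ‖ξ₁‖)| + |τ₂ + s₂ * ‖ξ₂‖| := abs_add_le _ _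
      _ ≤ |τ₀ + s₀ * ‖ξ₀‖| + |τ₁ + s₁ * ‖ξ₁‖| + |τ₂ + s₂ * ‖ξ₂‖| := by
          have := abs_sub (τ₀ + s₀ * ‖ξ₀‖) (τ₁ + s₁ * ‖ξ₁‖)
          linarith
      _ ≤ 3 * M := by linarith
  have hπ2 : π ^ 2 ≤ 10 := by nlinarith [Real.pi_lt_d2, Real.pi_pos]
  have hmin0 : (0:ℝ) ≤ min ‖ξ₁‖ ‖ξ₂‖ := le_min (norm_nonneg _) (norm_nonneg _)
  have hs₀abs : |s₀| = 1 := by rcases hs₀ with h | h <;> simp [h]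
  have habs : ∀ x y : ℝ, 0 ≤ x → x - |y| ≤ |s₀ * x - y| := by
    intro x y hx
    have h1 : |s₀ * x| = x := by rw [abs_mul, hs₀abs, one_mul, abs_of_nonneg hx]
    have := abs_sub_abs_le_abs_sub (s₀ * x) y
    rw [h1] at this; linarith
  have habs2 : ∀ x y : ℝ, 0 ≤ x → 0 ≤ y → y - x ≤ |s₀ * x - y| := by
    intro x y hx hy
    have h1 : |s₀ * x| = x := by rw [abs_mul, hs₀abs, one_mul, abs_of_nonneg hx]
    have := abs_sub_abs_le_abs_sub y (s₀ * x)
    rw [h1, abs_of_nonneg hy, abs_sub_comm] at this; linarith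
  have habs3 : ∀ x y : ℝ, 0 ≤ x → 0 ≤ y → y - x ≤ |s₀ * x + y| := by
    intro x y hx hy
    have h1 : |s₀ * x| = x := by rw [abs_mul, hs₀abs, one_mul, abs_of_nonneg hx]
    have := abs_sub_abs_le_abs_sub y (-(s₀ * x))
    rw [abs_neg, h1, abs_of_nonneg hy, sub_neg_eq_add] at this
    rwa [add_comm y (s₀ * x)] at this
  have hξ₀ : ‖ξ₀‖ = ‖ξ₁ - ξ₂‖ := by rw [hξ]
  -- it suffices to bound by π² * (3M)
  suffices h : min ‖ξ₁‖ ‖ξ₂‖ * angle (s₁ • ξ₁) (s₂ • ξ₂) ^ 2 ≤ π ^ 2 * (3 * M) by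
    have hM0 : 0 ≤ M := le_trans (abs_nonneg _) (le_max_left _ _)
    calc min ‖ξ₁‖ ‖ξ₂‖ * angle (s₁ • ξ₁) (s₂ • ξ₂) ^ 2 ≤ π ^ 2 * (3 * M) := h
      _ ≤ 10 * (3 * M) := by nlinarith
      _ = 30 * M := by ring
  rcases hs₁ with h1 | h1 <;> rcases hs₂ with h2 | h2 <;> subst h1 h2
  · -- s₁ = 1, s₂ = 1
    rw [one_smul, one_smul]
    have hkey := key_sub ξ₁ ξ₂ hξ₁ hξ₂
    rw [← hξ₀] at hkey
    have hlow : ‖ξ₀‖ - |‖ξ₁‖ - ‖ξ₂‖| ≤ 3 * M := by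
      have h := habs ‖ξ₀‖ (‖ξ₁‖ - ‖ξ₂‖) (norm_nonneg _)
      have heq : |s₀ * ‖ξ₀‖ - (‖ξ₁‖ - ‖ξ₂‖)| = |s₀ * ‖ξ₀‖ - 1 * ‖ξ₁‖ + 1 * ‖ξ₂‖| := by
        congr 1; ring
      rw [heq] at h; linarith
    calc min ‖ξ₁‖ ‖ξ₂‖ * angle ξ₁ ξ₂ ^ 2 ≤ π ^ 2 * (‖ξ₀‖ - |‖ξ₁‖ - ‖ξ₂‖|) := hkey
      _ ≤ π ^ 2 * (3 * M) := mul_le_mul_of_nonneg_left hlow (by positivity)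
  · -- s₁ = 1, s₂ = -1
    rw [one_smul, neg_one_smul]
    have hkey := key_add ξ₁ (-ξ₂) hξ₁ (neg_ne_zero.2 hξ₂)
    rw [show ξ₁ + -ξ₂ = ξ₁ - ξ₂ from (sub_eq_add_neg ξ₁ ξ₂).symm, norm_neg, ← hξ₀] at hkey
    have hlow : ‖ξ₁‖ + ‖ξ₂‖ - ‖ξ₀‖ ≤ 3 * M := by
      have h := habs2 ‖ξ₀‖ (‖ξ₁‖ + ‖ξ₂‖) (norm_nonneg _) (by positivity)
      have heq : |s₀ * ‖ξ₀‖ - (‖ξ₁‖ + ‖ξ₂‖)| = |s₀ * ‖ξ₀‖ - 1 * ‖ξ₁‖ + (-1) * ‖ξ₂‖| := by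
        congr 1; ring
      rw [heq] at h; linarith
    calc min ‖ξ₁‖ ‖ξ₂‖ * angle ξ₁ (-ξ₂) ^ 2 ≤ π ^ 2 * (‖ξ₁‖ + ‖ξ₂‖ - ‖ξ₀‖) := hkey
      _ ≤ π ^ 2 * (3 * M) := mul_le_mul_of_nonneg_left hlow (by positivity)
  · -- s₁ = -1, s₂ = 1
    rw [neg_one_smul, one_smul, ← angle_neg_neg, neg_neg]
    have hkey := key_add ξ₁ (-ξ₂) hξ₁ (neg_ne_zero.2 hξ₂)
    rw [show ξ₁ + -ξ₂ = ξ₁ - ξ₂ from (sub_eq_add_neg ξ₁ ξ₂).symm, norm_neg, ← hξ₀] at hkey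
    have hlow : ‖ξ₁‖ + ‖ξ₂‖ - ‖ξ₀‖ ≤ 3 * M := by
      have h := habs3 ‖ξ₀‖ (‖ξ₁‖ + ‖ξ₂‖) (norm_nonneg _) (by positivity)
      have heq : |s₀ * ‖ξ₀‖ + (‖ξ₁‖ + ‖ξ₂‖)| = |s₀ * ‖ξ₀‖ - (-1) * ‖ξ₁‖ + 1 * ‖ξ₂‖| := by
        congr 1; ring
      rw [heq] at h; linarith
    calc min ‖ξ₁‖ ‖ξ₂‖ * angle ξ₁ (-ξ₂) ^ 2 ≤ π ^ 2 * (‖ξ₁‖ + ‖ξ₂‖ - ‖ξ₀‖) := hkey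
      _ ≤ π ^ 2 * (3 * M) := mul_le_mul_of_nonneg_left hlow (by positivity)
  · -- s₁ = -1, s₂ = -1
    rw [neg_one_smul, neg_one_smul, angle_neg_neg]
    have hkey := key_sub ξ₁ ξ₂ hξ₁ hξ₂
    rw [← hξ₀] at hkey
    have hlow : ‖ξ₀‖ - |‖ξ₁‖ - ‖ξ₂‖| ≤ 3 * M := by
      have h := habs ‖ξ₀‖ (‖ξ₂‖ - ‖ξ₁‖) (norm_nonneg _)
      have heq : |s₀ * ‖ξ₀‖ - (‖ξ₂‖ - ‖ξ₁‖)| = |s₀ * ‖ξ₀‖ - (-1) * ‖ξ₁‖ + (-1) * ‖ξ₂‖| := by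
        congr 1; ring
      rw [heq, abs_sub_comm ‖ξ₂‖ ‖ξ₁‖] at h; linarith
    calc min ‖ξ₁‖ ‖ξ₂‖ * angle ξ₁ ξ₂ ^ 2 ≤ π ^ 2 * (‖ξ₀‖ - |‖ξ₁‖ - ‖ξ₂‖|) := hkey
      _ ≤ π ^ 2 * (3 * M) := mul_le_mul_of_nonneg_left hlow (by positivity)
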